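/- Let F : A ⥤ B be an exact functor between triangulated categories with left adjoint L and right adjoint R, and suppose: (a) the canonical natural transformation R → RFL → CL[1] (given by Rη_L followed by γ_R L, where γ_R comes from the cotwist triangle) is an isomorphism, and (b) the cotwist C is an autoequivalence of A. Then the natural transformation LT[-1] → LFR → R given by Lβ_R[-1] followed by ε_L R is an isomorphism of functors. -/

import Mathlib

open CategoryTheory Category Limits Pretriangulated

section Helpers

variable {A₁ A₂ : Type*} [Category A₁] [Category A₂]

lemma isZero_obj_of_isEquivalence (G : A₁ ⥤ A₂) [G.IsEquivalence] {X : A₁} (hX : IsZero X) :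
    IsZero (G.obj X) := by
  let e := G.asEquivalence
  constructor
  · intro Y
    letI : Unique (X ⟶ e.inverse.obj Y) := (hX.unique_to _).some
    exact ⟨(e.toAdjunction.homEquiv X Y).unique⟩
  · intro Y
    letI : Unique (e.symm.functor.obj Y ⟶ X) := (hX.unique_from _).some
    exact ⟨((e.symm.toAdjunction.homEquiv Y X).symm).unique⟩

lemma map_eq_zero_of_isEquivalence {A : Type*} [Category A] [Preadditive A] [HasZeroObject A]
    (G : A ⥤ A) [G.IsEquivalence] {X Y : A} (f : X ⟶ Y) (h : G.map f = 0) : f = 0 := by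
  haveI : G.PreservesZeroMorphisms :=
    Functor.preservesZeroMorphisms_of_map_zero_object
      ((isZero_obj_of_isEquivalence G (isZero_zero A)).isoZero)
  exact G.map_eq_zero_iff.1 h

end Helpers

/-- Lemma 2.3(i): let `F : A ⥤ B` be exact with left adjoint `L` and right adjoint `R`,
cotwist `C` (triangle `C →δ 𝟭 →η_R RF →γ_R C[1]`) and twist `T`
(triangle `FR →ε_R 𝟭 →α_R T →β_R FR[1]`).  If the canonical map
`γ_R L ∘ R η_L : R → RFL → CL[1]` is an isomorphism and `C` is an autoequivalence, then
`ε_L R ∘ L β_R[-1] : LT[-1] → LFR → R` is an isomorphism of functors (stated here after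
shifting once: `L β_R ≫ (commShift) ≫ ε_L R [1] : LT → (LFR)[1] → R[1]` is an isomorphism
objectwise). -/
theorem LT_iso_R_of_spherical {A B : Type*} [Category A] [Category B]
    [HasShift A ℤ] [HasShift B ℤ] [Preadditive A] [Preadditive B]
    [HasZeroObject A] [HasZeroObject B]
    [∀ n : ℤ, (shiftFunctor A n).Additive] [∀ n : ℤ, (shiftFunctor B n).Additive]
    [Pretriangulated A] [Pretriangulated B]
    (F : A ⥤ B) [F.CommShift ℤ] [F.IsTriangulated]
    (L R : B ⥤ A) [L.CommShift ℤ] [L.IsTriangulated] [R.CommShift ℤ] [R.IsTriangulated]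
    (adjL : L ⊣ F) (adjR : F ⊣ R)
    (C : A ⥤ A) [C.IsEquivalence]
    (δR : C ⟶ 𝟭 A) (γR : F ⋙ R ⟶ C ⋙ shiftFunctor A (1 : ℤ))
    (hC : ∀ a : A, Triangle.mk (δR.app a) (adjR.unit.app a) (γR.app a) ∈ distTriang A)
    (T : B ⥤ B) (αR : 𝟭 B ⟶ T) (βR : T ⟶ (R ⋙ F) ⋙ shiftFunctor B (1 : ℤ))
    (hT : ∀ b : B, Triangle.mk (adjR.counit.app b) (αR.app b) (βR.app b) ∈ distTriang B)
    (hcan : ∀ b : B, IsIso (R.map (adjL.unit.app b) ≫ γR.app (L.obj b))) :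
    ∀ b : B, IsIso (L.map (βR.app b) ≫
      (L.commShiftIso (1 : ℤ)).hom.app (F.obj (R.obj b)) ≫
      ((adjL.counit.app (R.obj b))⟦(1 : ℤ)⟧')) := by
  -- the cotwist vanishes on the image of `L`
  have hδL : ∀ y : B, δR.app (L.obj y) = 0 := by
    intro y
    have h31 := comp_distTriang_mor_zero₃₁ _ (hC (L.obj y))
    dsimp at h31
    replace h31 : γR.app (L.obj y) ≫ (δR.app (L.obj y))⟦(1 : ℤ)⟧' = 0 := h31
    haveI := hcan y
    have h2 : (R.map (adjL.unit.app y) ≫ γR.app (L.obj y)) ≫ (δR.app (L.obj y))⟦(1 : ℤ)⟧' =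
        (R.map (adjL.unit.app y) ≫ γR.app (L.obj y)) ≫ 0 := by
      rw [assoc, h31, comp_zero, comp_zero]
    exact (shiftFunctor A (1 : ℤ)).map_eq_zero_iff.1 ((cancel_epi _).1 h2)
  -- every composition `R y ⟶ C x ⟶ x` vanishes
  have hzero : ∀ (y : B) (x : A) (w : R.obj y ⟶ C.obj x), w ≫ δR.app x = 0 := by
    intro y x w
    haveI h1 : IsIso (R.map (adjL.unit.app (y⟦(1 : ℤ)⟧)) ≫ γR.app (L.obj (y⟦(1 : ℤ)⟧))) := hcan _
    haveI h2 : IsIso (R.map (adjL.unit.app y) ≫ γR.app (L.obj y)) := hcan y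
    let m : (shiftFunctor A (1 : ℤ)).obj (C.obj (L.obj (y⟦(1 : ℤ)⟧))) ⟶
        (shiftFunctor A (1 : ℤ)).obj ((C.obj (L.obj y))⟦(1 : ℤ)⟧) :=
      inv (R.map (adjL.unit.app (y⟦(1 : ℤ)⟧)) ≫ γR.app (L.obj (y⟦(1 : ℤ)⟧))) ≫
        (R.commShiftIso (1 : ℤ)).hom.app y ≫
        (R.map (adjL.unit.app y) ≫ γR.app (L.obj y))⟦(1 : ℤ)⟧'
    haveI : IsIso ((R.commShiftIso (1 : ℤ)).hom.app y) := inferInstance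
    haveI : IsIso m := by dsimp only [m]; infer_instance
    let m₀ : C.obj (L.obj (y⟦(1 : ℤ)⟧)) ⟶ (C.obj (L.obj y))⟦(1 : ℤ)⟧ :=
      (shiftFunctor A (1 : ℤ)).preimage m
    haveI : IsIso m₀ := by
      haveI : IsIso ((shiftFunctor A (1 : ℤ)).map m₀) := by
        show IsIso ((shiftFunctor A (1 : ℤ)).map ((shiftFunctor A (1 : ℤ)).preimage m))
        rw [Functor.map_preimage]; infer_instance
      exact isIso_of_fully_faithful (shiftFunctor A (1 : ℤ)) m₀
    let v : C.obj (L.obj (y⟦(1 : ℤ)⟧)) ⟶ C.obj x :=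
      m₀ ≫ inv (R.map (adjL.unit.app y) ≫ γR.app (L.obj y)) ≫ w
    have hw : w = (R.map (adjL.unit.app y) ≫ γR.app (L.obj y)) ≫ inv m₀ ≫ v := by
      dsimp only [v]
      rw [IsIso.inv_hom_id_assoc, IsIso.hom_inv_id_assoc]
    have hs : C.map (C.preimage v) = v := C.map_preimage v
    have hnat : C.map (C.preimage v) ≫ δR.app x =
        δR.app (L.obj (y⟦(1 : ℤ)⟧)) ≫ C.preimage v := by
      simpa using δR.naturality (C.preimage v)
    rw [hw, ← hs]
    simp only [assoc]
    rw [hnat, hδL (y⟦(1 : ℤ)⟧), zero_comp, comp_zero, comp_zero, comp_zero]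
  -- `R α = 0`
  have hRα : ∀ y : B, R.map (αR.app y) = 0 := by
    intro y
    have h12 := comp_distTriang_mor_zero₁₂ _ (hT y)
    dsimp at h12
    replace h12 : adjR.counit.app y ≫ αR.app y = 0 := h12
    calc R.map (αR.app y)
        = (adjR.unit.app (R.obj y) ≫ R.map (adjR.counit.app y)) ≫ R.map (αR.app y) := by
          rw [adjR.right_triangle_components]
          exact (id_comp _).symm
      _ = adjR.unit.app (R.obj y) ≫ R.map (adjR.counit.app y ≫ αR.app y) := by
          rw [assoc, R.map_comp]
      _ = 0 := by rw [h12, R.map_zero, comp_zero]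
  -- `L α = 0`
  have hLα : ∀ y : B, L.map (αR.app y) = 0 := by
    intro y
    haveI := hcan y
    have hnat : (R.map (adjL.unit.app y) ≫ γR.app (L.obj y)) ≫
        (shiftFunctor A (1 : ℤ)).map (C.map (L.map (αR.app y))) =
        R.map (αR.app y) ≫ (R.map (adjL.unit.app (T.obj y)) ≫ γR.app (L.obj (T.obj y))) := by
      have h1 := γR.naturality (L.map (αR.app y))
      have h2 := adjL.unit.naturality (αR.app y)
      dsimp at h1 h2
      rw [assoc, ← h1, ← assoc, ← R.map_comp, ← h2, R.map_comp, assoc]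
    rw [hRα y, zero_comp] at hnat
    have h3 : (shiftFunctor A (1 : ℤ)).map (C.map (L.map (αR.app y))) = 0 :=
      (cancel_epi (R.map (adjL.unit.app y) ≫ γR.app (L.obj y))).1 (by rw [comp_zero]; exact hnat)
    exact map_eq_zero_of_isEquivalence C _ ((shiftFunctor A (1 : ℤ)).map_eq_zero_iff.1 h3)
  intro b
  haveI hψb : IsIso (R.map (adjL.unit.app b) ≫ γR.app (L.obj b)) := hcan b
  have adjS : shiftFunctor A (1 : ℤ) ⊣ shiftFunctor A (-1 : ℤ) :=
    (shiftEquiv A (1 : ℤ)).toAdjunction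
  have hTL : L.mapTriangle.obj (Triangle.mk (adjR.counit.app b) (αR.app b) (βR.app b)) ∈
      distTriang A := L.map_distinguished _ (hT b)
  -- additivity of the hom-equivalences
  have hSneg : ∀ {X Y : A} (u : (shiftFunctor A (1 : ℤ)).obj X ⟶ Y),
      (adjS.homEquiv X Y) (-u) = -(adjS.homEquiv X Y) u := by
    intro X Y u
    simp only [adjS.homEquiv_unit, Functor.map_neg, Preadditive.comp_neg]
  have hSsub : ∀ {X Y : A} (u v : (shiftFunctor A (1 : ℤ)).obj X ⟶ Y),
      (adjS.homEquiv X Y) (u - v) = (adjS.homEquiv X Y) u - (adjS.homEquiv X Y) v := by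
    intro X Y u v
    simp only [adjS.homEquiv_unit, Functor.map_sub, Preadditive.comp_sub]
  have hLsub : ∀ {X : B} {Y : A} (u v : L.obj X ⟶ Y),
      (adjL.homEquiv X Y) (u - v) = (adjL.homEquiv X Y) u - (adjL.homEquiv X Y) v := by
    intro X Y u v
    simp only [adjL.homEquiv_unit, Functor.map_sub, Preadditive.comp_sub]
  have hRsub : ∀ {X : A} {Y : B} (u v : F.obj X ⟶ Y),
      (adjR.homEquiv X Y) (u - v) = (adjR.homEquiv X Y) u - (adjR.homEquiv X Y) v := by
    intro X Y u v
    simp only [adjR.homEquiv_unit, Functor.map_sub, Preadditive.comp_sub]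
  -- injectivity
  have hinj : ∀ (a : A) (g : (shiftFunctor A (1 : ℤ)).obj (R.obj b) ⟶ a),
      (L.map (βR.app b) ≫ (L.commShiftIso (1 : ℤ)).hom.app (F.obj (R.obj b)) ≫
        (adjL.counit.app (R.obj b))⟦(1 : ℤ)⟧') ≫ g = 0 → g = 0 := by
    intro a g hg
    obtain ⟨y0, hy0⟩ := Triangle.yoneda_exact₃ _ (rot_of_distTriang _ hTL)
      ((adjL.counit.app (R.obj b))⟦(1 : ℤ)⟧' ≫ g) (by
        dsimp
        change (L.map (βR.app b) ≫ (L.commShiftIso (1 : ℤ)).hom.app (F.obj (R.obj b))) ≫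
          ((adjL.counit.app (R.obj b))⟦(1 : ℤ)⟧' ≫ g) = 0
        simpa only [assoc] using hg)
    let y1 : (shiftFunctor A (1 : ℤ)).obj (L.obj b) ⟶ a := y0
    have hy1 : (shiftFunctor A (1 : ℤ)).map (adjL.counit.app (R.obj b)) ≫ g =
        (-((shiftFunctor A (1 : ℤ)).map (L.map (adjR.counit.app b)))) ≫ y1 := hy0
    rw [Preadditive.neg_comp] at hy1
    have e1 := congrArg (adjS.homEquiv _ _) hy1
    rw [adjS.homEquiv_naturality_left, hSneg, adjS.homEquiv_naturality_left,
      ← Preadditive.comp_neg] at e1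
    have e2 := congrArg (adjL.homEquiv _ _) e1
    rw [adjL.homEquiv_naturality_right, adjL.homEquiv_unit, adjL.right_triangle_components,
      id_comp, adjL.homEquiv_naturality_left] at e2
    have e3 := congrArg (adjR.homEquiv _ _) e2
    simp only [Functor.id_obj, Functor.comp_obj] at e3
    rw [adjR.homEquiv_unit, adjR.unit_naturality, adjR.homEquiv_unit, R.map_comp,
      adjR.right_triangle_components_assoc] at e3
    have e4 : R.map ((adjL.homEquiv _ _) (-((adjS.homEquiv _ _) y1))) ≫
        γR.app ((shiftFunctor A (-1 : ℤ)).obj a) = 0 := by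
      rw [← e3, assoc]
      have h23 := comp_distTriang_mor_zero₂₃ _ (hC ((shiftFunctor A (-1 : ℤ)).obj a))
      dsimp at h23
      replace h23 : adjR.unit.app ((shiftFunctor A (-1 : ℤ)).obj a) ≫
        γR.app ((shiftFunctor A (-1 : ℤ)).obj a) = 0 := h23
      rw [h23, comp_zero]
    have e5 : (R.map (adjL.unit.app b) ≫ γR.app (L.obj b)) ≫
        (shiftFunctor A (1 : ℤ)).map (C.map (-((adjS.homEquiv _ _) y1))) = 0 := by
      have hn := γR.naturality (-((adjS.homEquiv _ _) y1))
      dsimp at hn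
      rw [adjL.homEquiv_unit, R.map_comp, assoc, hn] at e4
      rw [assoc]
      exact e4
    have e7 : C.map (-((adjS.homEquiv _ _) y1)) = 0 :=
      (shiftFunctor A (1 : ℤ)).map_eq_zero_iff.1
        ((cancel_epi (R.map (adjL.unit.app b) ≫ γR.app (L.obj b))).1 (by
          rw [comp_zero]; exact e5))
    have e8 : -((adjS.homEquiv _ _) y1) = 0 := map_eq_zero_of_isEquivalence C _ e7
    have e9 : (adjS.homEquiv _ _) g ≫ adjR.unit.app ((shiftFunctor A (-1 : ℤ)).obj a) = 0 := by
      rw [e3, e8, adjL.homEquiv_unit, F.map_zero, comp_zero, R.map_zero]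
    obtain ⟨w, hw⟩ := Triangle.coyoneda_exact₂ _ (hC ((shiftFunctor A (-1 : ℤ)).obj a))
      ((adjS.homEquiv _ _) g) e9
    have e10 : (adjS.homEquiv _ _) g = 0 := by
      rw [hw]
      exact hzero b _ w
    refine (adjS.homEquiv _ _).injective (e10.trans ?_)
    rw [adjS.homEquiv_unit, Functor.map_zero, comp_zero]
  -- construction of the right inverse
  obtain ⟨u00, hu00⟩ := Triangle.yoneda_exact₃ _ hTL (𝟙 (L.obj (T.obj b))) (by
    dsimp
    change L.map (αR.app b) ≫ 𝟙 (L.obj (T.obj b)) = 0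
    rw [comp_id]
    exact hLα b)
  let u₀ : (shiftFunctor A (1 : ℤ)).obj (L.obj (F.obj (R.obj b))) ⟶ L.obj (T.obj b) := u00
  have hu₀ : 𝟙 (L.obj (T.obj b)) =
      (L.map (βR.app b) ≫ (L.commShiftIso (1 : ℤ)).hom.app (F.obj (R.obj b))) ≫ u₀ := hu00
  obtain ⟨q, hq⟩ : ∃ q : R.obj b ⟶ R.obj (F.obj ((shiftFunctor A (-1 : ℤ)).obj (L.obj (T.obj b)))),
      q = (adjR.homEquiv _ _) ((adjL.homEquiv _ _) ((adjS.homEquiv _ _) u₀)) := ⟨_, rfl⟩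
  obtain ⟨p', hp⟩ : ∃ p' : L.obj b ⟶ (shiftFunctor A (-1 : ℤ)).obj (L.obj (T.obj b)),
      (R.map (adjL.unit.app b) ≫ γR.app (L.obj b)) ≫ (shiftFunctor A (1 : ℤ)).map (C.map p') =
        q ≫ γR.app ((shiftFunctor A (-1 : ℤ)).obj (L.obj (T.obj b))) := by
    refine ⟨C.preimage ((shiftFunctor A (1 : ℤ)).preimage
      (inv (R.map (adjL.unit.app b) ≫ γR.app (L.obj b)) ≫
        (q ≫ γR.app ((shiftFunctor A (-1 : ℤ)).obj (L.obj (T.obj b)))))), ?_⟩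
    rw [C.map_preimage, Functor.map_preimage, IsIso.hom_inv_id_assoc]
  obtain ⟨p1, hp1⟩ : ∃ p1 : (shiftFunctor A (1 : ℤ)).obj (L.obj b) ⟶ L.obj (T.obj b),
      (adjS.homEquiv _ _) p1 = p' := ⟨(adjS.homEquiv _ _).symm p', Equiv.apply_symm_apply _ _⟩
  obtain ⟨v, hv⟩ : ∃ v : (shiftFunctor A (1 : ℤ)).obj (L.obj (F.obj (R.obj b))) ⟶ L.obj (T.obj b),
      v = (shiftFunctor A (1 : ℤ)).map (L.map (adjR.counit.app b)) ≫ p1 := ⟨_, rfl⟩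
  -- claim A : the corrected map is still a lift of the identity
  have claimA : (L.map (βR.app b) ≫ (L.commShiftIso (1 : ℤ)).hom.app (F.obj (R.obj b))) ≫
      (u₀ - v) = 𝟙 (L.obj (T.obj b)) := by
    have hz : (L.map (βR.app b) ≫ (L.commShiftIso (1 : ℤ)).hom.app (F.obj (R.obj b))) ≫
        (shiftFunctor A (1 : ℤ)).map (L.map (adjR.counit.app b)) = 0 := by
      have h31 := comp_distTriang_mor_zero₃₁ _ (hT b)
      dsimp at h31
      replace h31 : βR.app b ≫ (adjR.counit.app b)⟦(1 : ℤ)⟧' = 0 := h31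
      rw [assoc, ← Functor.commShiftIso_hom_naturality, ← assoc, ← L.map_comp, h31,
        L.map_zero, zero_comp]
    rw [Preadditive.comp_sub, hv, ← assoc, hz, zero_comp, sub_zero, ← hu₀]
  -- claim B : the Q-side image of `u₀ - v` is killed by `γ`
  have hSv : (adjS.homEquiv _ _) v = L.map (adjR.counit.app b) ≫ p' := by
    rw [hv, adjS.homEquiv_naturality_left]
    simp only [Functor.id_obj]
    rw [hp1]
  have hbig : (adjR.homEquiv _ _) ((adjL.homEquiv _ _) ((adjS.homEquiv _ _) (u₀ - v))) =
      q - R.map ((adjL.homEquiv _ _) p') := by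
    rw [hSsub, hLsub, hRsub, ← hq, hSv, adjL.homEquiv_naturality_left]
    simp only [Functor.id_obj, Functor.comp_obj]
    rw [adjR.homEquiv_unit, R.map_comp, adjR.right_triangle_components_assoc]
  have claimB : ((adjR.homEquiv _ _) ((adjL.homEquiv _ _) ((adjS.homEquiv _ _) (u₀ - v)))) ≫
      γR.app ((shiftFunctor A (-1 : ℤ)).obj (L.obj (T.obj b))) = 0 := by
    have hgamma : R.map ((adjL.homEquiv _ _) p') ≫
        γR.app ((shiftFunctor A (-1 : ℤ)).obj (L.obj (T.obj b))) =
        q ≫ γR.app ((shiftFunctor A (-1 : ℤ)).obj (L.obj (T.obj b))) := by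
      have hn := γR.naturality p'
      dsimp at hn
      rw [adjL.homEquiv_unit, R.map_comp, assoc, hn, ← assoc]
      exact hp
    rw [hbig, Preadditive.sub_comp, hgamma, sub_self]
  obtain ⟨g₂, hg₂⟩ : ∃ g₂ : R.obj b ⟶ (shiftFunctor A (-1 : ℤ)).obj (L.obj (T.obj b)),
      (adjR.homEquiv _ _) ((adjL.homEquiv _ _) ((adjS.homEquiv _ _) (u₀ - v))) =
        g₂ ≫ adjR.unit.app ((shiftFunctor A (-1 : ℤ)).obj (L.obj (T.obj b))) :=
    Triangle.coyoneda_exact₃ _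
    (hC ((shiftFunctor A (-1 : ℤ)).obj (L.obj (T.obj b))))
    ((adjR.homEquiv _ _) ((adjL.homEquiv _ _) ((adjS.homEquiv _ _) (u₀ - v)))) claimB
  dsimp at hg₂
  obtain ⟨g, hgdef⟩ : ∃ g : (shiftFunctor A (1 : ℤ)).obj (R.obj b) ⟶ L.obj (T.obj b),
      (adjS.homEquiv _ _) g = g₂ := ⟨(adjS.homEquiv _ _).symm g₂, Equiv.apply_symm_apply _ _⟩
  -- key : u₀ - v = e⟦1⟧ ≫ g
  have hkey : u₀ - v = (adjL.counit.app (R.obj b))⟦(1 : ℤ)⟧' ≫ g := by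
    refine (adjS.homEquiv _ _).injective ((adjL.homEquiv _ _).injective
      ((adjR.homEquiv _ _).injective ?_))
    have hchain2 : (adjR.homEquiv _ _) ((adjL.homEquiv _ _) ((adjS.homEquiv _ _)
        ((adjL.counit.app (R.obj b))⟦(1 : ℤ)⟧' ≫ g))) = g₂ ≫
          adjR.unit.app ((shiftFunctor A (-1 : ℤ)).obj (L.obj (T.obj b))) := by
      rw [adjS.homEquiv_naturality_left]
      simp only [Functor.id_obj]
      rw [hgdef, adjL.homEquiv_naturality_right,
        adjL.homEquiv_unit, adjL.right_triangle_components, id_comp, adjR.homEquiv_unit,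
        adjR.unit_naturality]
    rw [hchain2]
    exact hg₂
  -- conclusion
  have hright : (L.map (βR.app b) ≫ (L.commShiftIso (1 : ℤ)).hom.app (F.obj (R.obj b)) ≫
      (adjL.counit.app (R.obj b))⟦(1 : ℤ)⟧') ≫ g = 𝟙 (L.obj (T.obj b)) := by
    have hassoc : (L.map (βR.app b) ≫ (L.commShiftIso (1 : ℤ)).hom.app (F.obj (R.obj b)) ≫
        (adjL.counit.app (R.obj b))⟦(1 : ℤ)⟧') ≫ g =
        (L.map (βR.app b) ≫ (L.commShiftIso (1 : ℤ)).hom.app (F.obj (R.obj b))) ≫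
          ((adjL.counit.app (R.obj b))⟦(1 : ℤ)⟧' ≫ g) := by
      simp only [assoc]
    rw [hassoc, ← hkey]
    exact claimA
  have hleft : g ≫ (L.map (βR.app b) ≫ (L.commShiftIso (1 : ℤ)).hom.app (F.obj (R.obj b)) ≫
      (adjL.counit.app (R.obj b))⟦(1 : ℤ)⟧') = 𝟙 ((shiftFunctor A (1 : ℤ)).obj (R.obj b)) := by
    have h0 : (L.map (βR.app b) ≫ (L.commShiftIso (1 : ℤ)).hom.app (F.obj (R.obj b)) ≫
        (adjL.counit.app (R.obj b))⟦(1 : ℤ)⟧') ≫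
        (g ≫ (L.map (βR.app b) ≫ (L.commShiftIso (1 : ℤ)).hom.app (F.obj (R.obj b)) ≫
          (adjL.counit.app (R.obj b))⟦(1 : ℤ)⟧') - 𝟙 _) = 0 := by
      dsimp only [Functor.id_obj]
      rw [Preadditive.comp_sub, comp_id, ← assoc, hright, id_comp, sub_self]
    have := hinj _ _ h0
    rwa [sub_eq_zero] at this
  exact ⟨⟨g, hright, hleft⟩⟩
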